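/- For every permutation w of {1,…,n}: raj(w) = raj(Φ(w)) = raj(Φ_inv(w)); moreover rajcode(Φ_inv(w)) = rajcode(w). -/

import Mathlib

open scoped Classical

noncomputable section

namespace RajRegularity

variable {n : ℕ}

/-- Maximal length of an increasing subsequence of `w(i), …, w(n)` beginning with `w(i)`:
the largest cardinality of a set `s` of positions that contains `i`, consists of positions
`≥ i`, and on which `w` is strictly increasing. -/
def lisFrom (w : Equiv.Perm (Fin n)) (i : Fin n) : ℕ :=
  (Finset.univ.filter fun s : Finset (Fin n) =>
      i ∈ s ∧ (∀ j ∈ s, i ≤ j) ∧ ∀ j ∈ s, ∀ k ∈ s, j < k → w j < w k).sup Finset.card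

/-- `rajCode w i = (n − i + 1) −` (maximal length of an increasing subsequence of
`w(i), …, w(n)` beginning with `w(i)`); here positions are 0-based, so the number of
positions `≥ i` is `n - i`. -/
def rajCode (w : Equiv.Perm (Fin n)) (i : Fin n) : ℕ :=
  (n - (i : ℕ)) - lisFrom w i

/-- The Rajchgot index `raj w = Σᵢ rajCode w i`. -/
def raj (w : Equiv.Perm (Fin n)) : ℕ := ∑ i, rajCode w i

/-- The number of inversions of `w`: pairs of positions `i < j` with `w i > w j`. -/
def invNum (w : Equiv.Perm (Fin n)) : ℕ :=
  (Finset.univ.filter fun p : Fin n × Fin n => p.1 < p.2 ∧ w p.2 < w p.1).card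

/-- The `i`-th entry of the inv code: `ℓ_i(w) = #{ j : i < j, w j < w i }`. -/
def ellCode (w : Equiv.Perm (Fin n)) (i : Fin n) : ℕ :=
  (Finset.univ.filter fun j : Fin n => i < j ∧ w j < w i).card

/-- The set of descent positions of `w` (0-based position `j` with `w j > w (j+1)`). -/
def descents (w : Equiv.Perm (Fin n)) : Finset (Fin n) :=
  Finset.univ.filter fun j : Fin n =>
    if h : (j : ℕ) + 1 < n then w ⟨(j : ℕ) + 1, h⟩ < w j else False

/-- The major index: the sum of the (1-based) descent positions of `w`. -/
def maj (w : Equiv.Perm (Fin n)) : ℕ := ∑ j ∈ descents w, ((j : ℕ) + 1)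

/-- `mCode w i`: the number of descents of `w` at positions `≥ i`. -/
def mCode (w : Equiv.Perm (Fin n)) (i : Fin n) : ℕ :=
  ((descents w).filter fun j => i ≤ j).card

/-- `w` is dominant iff it avoids the pattern 132. -/
def Dominant (w : Equiv.Perm (Fin n)) : Prop :=
  ¬ ∃ i j k : Fin n, i < j ∧ j < k ∧ w i < w k ∧ w k < w j

/-- `w` is fireworks iff there are no positions `i < j` with `w j < w (j+1) < w i`. -/
def Fireworks (w : Equiv.Perm (Fin n)) : Prop :=
  ¬ ∃ (i j : Fin n) (h : (j : ℕ) + 1 < n),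
      i < j ∧ w j < w ⟨(j : ℕ) + 1, h⟩ ∧ w ⟨(j : ℕ) + 1, h⟩ < w i

/-- `w` is inverse fireworks iff `w⁻¹` is fireworks. -/
def InvFireworks (w : Equiv.Perm (Fin n)) : Prop := Fireworks w⁻¹

/-- `w` is a valley permutation: for some `a`, it is strictly decreasing on positions `≤ a`
and strictly increasing on positions `≥ a`. -/
def Valley (w : Equiv.Perm (Fin n)) : Prop :=
  ∃ a : ℕ, (∀ i j : Fin n, i < j → (j : ℕ) ≤ a → w j < w i) ∧
    ∀ i j : Fin n, a ≤ (i : ℕ) → i < j → w i < w j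

/-- `eps w i` is the (1-based) blob index `ε_i(w) = i + r_i(w)`. -/
def eps (w : Equiv.Perm (Fin n)) (i : Fin n) : ℕ := (i : ℕ) + 1 + rajCode w i

/-- The shape of `w`: `α_k(w) = #{ i : ε_i(w) = k }` (here `k : Fin n` stands for the
1-based index `k + 1`). -/
def shape (w : Equiv.Perm (Fin n)) : Fin n → ℕ := fun k =>
  (Finset.univ.filter fun i : Fin n => eps w i = (k : ℕ) + 1).card

/-- Dominance order on shapes: `α ⪰ β` iff every tail sum of `α` is at least the
corresponding tail sum of `β`. -/
def Dominates (α β : Fin n → ℕ) : Prop :=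
  ∀ m : Fin n,
    ∑ k ∈ Finset.univ.filter (fun k : Fin n => m ≤ k), β k ≤
      ∑ k ∈ Finset.univ.filter (fun k : Fin n => m ≤ k), α k

/-- Right weak order: `u ≤_R w` iff `w = u * v` length-additively. -/
def leR (u w : Equiv.Perm (Fin n)) : Prop :=
  ∃ v : Equiv.Perm (Fin n), w = u * v ∧ invNum w = invNum u + invNum v

/-- Left weak order: `u ≤_L w` iff `w = v * u` length-additively. -/
def leL (u w : Equiv.Perm (Fin n)) : Prop :=
  ∃ v : Equiv.Perm (Fin n), w = v * u ∧ invNum w = invNum v + invNum u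

/-- Two-sided weak order: the transitive closure of the union of left and right weak
orders (both are reflexive, so we may use the reflexive-transitive closure). -/
def leLR (u w : Equiv.Perm (Fin n)) : Prop :=
  Relation.ReflTransGen (fun a b : Equiv.Perm (Fin n) => leL a b ∨ leR a b) u w

/-- The maximum of the block of the set partition `π(w)` containing the value `v`;
the block of `v` is `{ v' : ε_{w⁻¹ v'}(w) = ε_{w⁻¹ v}(w) }`. -/
def blockMax (w : Equiv.Perm (Fin n)) (v : Fin n) : ℕ :=
  ((Finset.univ.filter fun v' : Fin n => eps w (w⁻¹ v') = eps w (w⁻¹ v)).max'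
      ⟨v, Finset.mem_filter.mpr ⟨Finset.mem_univ v, rfl⟩⟩).val

/-- The fireworks map `Φ`: the one-line word of `Φ w` lists the blocks of `π(w)` in
increasing order of their maxima, each block written in decreasing order.  Equivalently,
`Φ w` sorts the values by the key (max of block, value reversed), lexicographically. -/
def Phi (w : Equiv.Perm (Fin n)) : Equiv.Perm (Fin n) :=
  Tuple.sort fun v : Fin n => n * blockMax w v + (n - 1 - (v : ℕ))

/-- The inverse fireworks map `Φ_inv w = Φ(w⁻¹)⁻¹`. -/
def PhiInv (w : Equiv.Perm (Fin n)) : Equiv.Perm (Fin n) := (Phi w⁻¹)⁻¹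

/-- Partial sums of a sequence of block sizes. -/
def psum (a : ℕ → ℕ) (m : ℕ) : ℕ := ∑ j ∈ Finset.range m, a j

/-- The index of the block (interval `[psum a m, psum a (m+1))`) containing the value `v`. -/
def blockIdx (n : ℕ) (a : ℕ → ℕ) (v : Fin n) : ℕ :=
  ((Finset.range n).filter fun m => psum a (m + 1) ≤ (v : ℕ)).card

/-- The layered permutation with block sizes `a 0, a 1, …`: it reverses each of the
consecutive intervals `[psum a m, psum a (m+1))` of `{0, …, n-1}`.  Equivalently, its
one-line word sorts the values by (block index, value reversed) lexicographically. -/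
def layered (n : ℕ) (a : ℕ → ℕ) : Equiv.Perm (Fin n) :=
  Tuple.sort fun v : Fin n => n * blockIdx n a v + (n - 1 - (v : ℕ))

/-- The layered permutation `e_α` associated to a shape `α : Fin n → ℕ`. -/
def eOf (α : Fin n → ℕ) : Equiv.Perm (Fin n) :=
  layered n fun m => if h : m < n then α ⟨m, h⟩ else 0

/-! ### Auxiliary lemmas for the proof -/

/-- Witness sets for `lisFrom`. -/
def Wit (w : Equiv.Perm (Fin n)) (i : Fin n) (s : Finset (Fin n)) : Prop :=
  i ∈ s ∧ (∀ j ∈ s, i ≤ j) ∧ ∀ j ∈ s, ∀ k ∈ s, j < k → w j < w k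

lemma wit_mem_filter {w : Equiv.Perm (Fin n)} {i : Fin n} {s : Finset (Fin n)} :
    s ∈ (Finset.univ.filter fun s : Finset (Fin n) =>
      i ∈ s ∧ (∀ j ∈ s, i ≤ j) ∧ ∀ j ∈ s, ∀ k ∈ s, j < k → w j < w k) ↔ Wit w i s := by
  simp [Wit]

lemma card_le_lisFrom {w : Equiv.Perm (Fin n)} {i : Fin n} {s : Finset (Fin n)}
    (h : Wit w i s) : s.card ≤ lisFrom w i :=
  Finset.le_sup (wit_mem_filter.mpr h)

lemma lisFrom_le {w : Equiv.Perm (Fin n)} {i : Fin n} {m : ℕ}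
    (h : ∀ s, Wit w i s → s.card ≤ m) : lisFrom w i ≤ m :=
  Finset.sup_le fun s hs => h s (wit_mem_filter.mp hs)

lemma wit_singleton (w : Equiv.Perm (Fin n)) (i : Fin n) : Wit w i {i} := by
  refine ⟨Finset.mem_singleton_self i, ?_, ?_⟩
  · intro j hj; rw [Finset.mem_singleton.mp hj]
  · intro j hj k hk hlt
    rw [Finset.mem_singleton.mp hj, Finset.mem_singleton.mp hk] at hlt
    exact absurd hlt (lt_irrefl _)

lemma exists_wit (w : Equiv.Perm (Fin n)) (i : Fin n) :
    ∃ s, Wit w i s ∧ s.card = lisFrom w i := by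
  obtain ⟨s, hs, h⟩ := Finset.exists_mem_eq_sup _
    ⟨{i}, wit_mem_filter.mpr (wit_singleton w i)⟩ Finset.card
  exact ⟨s, wit_mem_filter.mp hs, h.symm⟩

lemma one_le_lisFrom (w : Equiv.Perm (Fin n)) (i : Fin n) : 1 ≤ lisFrom w i := by
  simpa using card_le_lisFrom (wit_singleton w i)

lemma lisFrom_le_sub (w : Equiv.Perm (Fin n)) (i : Fin n) : lisFrom w i ≤ n - (i : ℕ) := by
  refine lisFrom_le fun s hs => ?_
  calc s.card ≤ (Finset.Ici i).card :=
        Finset.card_le_card fun j hj => Finset.mem_Ici.mpr (hs.2.1 j hj)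
    _ = n - (i : ℕ) := Fin.card_Ici i

lemma lisFrom_succ_le {w : Equiv.Perm (Fin n)} {i j : Fin n} (hij : i < j) (hw : w i < w j) :
    lisFrom w j + 1 ≤ lisFrom w i := by
  obtain ⟨s, hs, hcard⟩ := exists_wit w j
  have hi : i ∉ s := fun h => absurd (hs.2.1 i h) (not_le.mpr hij)
  have hwit : Wit w i (insert i s) := by
    refine ⟨Finset.mem_insert_self _ _, ?_, ?_⟩
    · intro k hk
      rcases Finset.mem_insert.mp hk with rfl | hk
      · exact le_refl _
      · exact le_of_lt (lt_of_lt_of_le hij (hs.2.1 k hk))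
    · intro a ha b hb hab
      rcases Finset.mem_insert.mp ha with ha' | ha'
      · rcases Finset.mem_insert.mp hb with hb' | hb'
        · rw [ha', hb'] at hab; exact absurd hab (lt_irrefl _)
        · rw [ha']
          rcases eq_or_lt_of_le (hs.2.1 b hb') with hjb | hjb
          · rw [← hjb]; exact hw
          · exact lt_trans hw (hs.2.2 j hs.1 b hb' hjb)
      · rcases Finset.mem_insert.mp hb with hb' | hb'
        · rw [hb'] at hab
          exact absurd hab (asymm (lt_of_lt_of_le hij (hs.2.1 a ha')))
        · exact hs.2.2 a ha' b hb' hab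
  have := card_le_lisFrom hwit
  rwa [Finset.card_insert_of_notMem hi, hcard] at this

lemma lisFrom_step {w : Equiv.Perm (Fin n)} {i : Fin n} (h2 : 2 ≤ lisFrom w i) :
    ∃ j, i < j ∧ w i < w j ∧ lisFrom w j + 1 = lisFrom w i := by
  obtain ⟨s, hs, hcard⟩ := exists_wit w i
  have hne : (s.erase i).Nonempty := by
    rw [← Finset.card_pos, Finset.card_erase_of_mem hs.1, hcard]; omega
  set j := (s.erase i).min' hne with hj
  have hjmem : j ∈ s.erase i := Finset.min'_mem _ hne
  have hjs : j ∈ s := Finset.mem_of_mem_erase hjmem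
  have hij : i < j := lt_of_le_of_ne (hs.2.1 j hjs) (Ne.symm (Finset.ne_of_mem_erase hjmem))
  have hw : w i < w j := hs.2.2 i hs.1 j hjs hij
  have hwit : Wit w j (s.erase i) :=
    ⟨hjmem, fun k hk => Finset.min'_le _ k hk, fun a ha b hb hab =>
      hs.2.2 a (Finset.mem_of_mem_erase ha) b (Finset.mem_of_mem_erase hb) hab⟩
  have h1 := card_le_lisFrom hwit
  rw [Finset.card_erase_of_mem hs.1, hcard] at h1
  have h2' := lisFrom_succ_le hij hw
  exact ⟨j, hij, hw, by omega⟩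

lemma perm_inv_apply_self (f : Equiv.Perm (Fin n)) (x : Fin n) : f⁻¹ (f x) = x :=
  Equiv.symm_apply_apply f x

lemma perm_apply_inv_self (f : Equiv.Perm (Fin n)) (x : Fin n) : f (f⁻¹ x) = x :=
  Equiv.apply_symm_apply f x

lemma lisFrom_le_inv (w : Equiv.Perm (Fin n)) (i : Fin n) :
    lisFrom w i ≤ lisFrom w⁻¹ (w i) := by
  obtain ⟨s, hs, hcard⟩ := exists_wit w i
  have hwit : Wit w⁻¹ (w i) (s.image w) := by
    refine ⟨Finset.mem_image_of_mem w hs.1, ?_, ?_⟩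
    · intro q hq
      obtain ⟨j, hj, rfl⟩ := Finset.mem_image.mp hq
      rcases eq_or_lt_of_le (hs.2.1 j hj) with rfl | hij
      · exact le_refl _
      · exact le_of_lt (hs.2.2 i hs.1 j hj hij)
    · intro a ha b hb hab
      obtain ⟨j, hj, rfl⟩ := Finset.mem_image.mp ha
      obtain ⟨k, hk, rfl⟩ := Finset.mem_image.mp hb
      rw [perm_inv_apply_self, perm_inv_apply_self]
      rcases lt_trichotomy j k with h | rfl | h
      · exact h
      · exact absurd hab (lt_irrefl _)
      · exact absurd hab (asymm (hs.2.2 k hk j hj h))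
  have := card_le_lisFrom hwit
  rwa [Finset.card_image_of_injective s w.injective, hcard] at this

lemma lisFrom_inv_apply (w : Equiv.Perm (Fin n)) (i : Fin n) :
    lisFrom w⁻¹ (w i) = lisFrom w i := by
  refine le_antisymm ?_ (lisFrom_le_inv w i)
  have := lisFrom_le_inv w⁻¹ (w i)
  simpa using this

/-- The key computation: if `g` is a "level function" compatible with `σ`
(values increase only when the level strictly drops, and every level `≥ 2`
can be continued one step down), then `lisFrom σ = g`. -/
lemma lisFrom_eq_of_sorted (σ : Equiv.Perm (Fin n)) (g : Fin n → ℕ)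
    (hA : ∀ p q : Fin n, p < q → σ p < σ q → g q < g p)
    (hB : ∀ p, 1 ≤ g p)
    (hC : ∀ p, 2 ≤ g p → ∃ q, p < q ∧ σ p < σ q ∧ g q + 1 = g p) (p : Fin n) :
    lisFrom σ p = g p := by
  have upper : ∀ p : Fin n, lisFrom σ p ≤ g p := by
    intro p
    refine lisFrom_le fun s hs => ?_
    have hmaps : ∀ j ∈ s, g j ∈ Finset.Icc 1 (g p) := by
      intro j hj
      refine Finset.mem_Icc.mpr ⟨hB j, ?_⟩
      rcases eq_or_lt_of_le (hs.2.1 j hj) with rfl | hpj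
      · exact le_refl _
      · exact le_of_lt (hA p j hpj (hs.2.2 p hs.1 j hj hpj))
    have hinj : Set.InjOn g s := by
      intro a ha b hb hab
      rcases lt_trichotomy a b with h | h | h
      · have := hA a b h (hs.2.2 a (Finset.mem_coe.mp ha) b (Finset.mem_coe.mp hb) h); omega
      · exact h
      · have := hA b a h (hs.2.2 b (Finset.mem_coe.mp hb) a (Finset.mem_coe.mp ha) h); omega
    have := Finset.card_le_card_of_injOn g hmaps hinj
    rwa [Nat.card_Icc, Nat.add_sub_cancel] at this
  have lower : ∀ m, ∀ p : Fin n, g p ≤ m → g p ≤ lisFrom σ p := by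
    intro m
    induction m with
    | zero => intro p hp; have := hB p; omega
    | succ m ih =>
      intro p hp
      by_cases h1 : g p ≤ 1
      · have := one_le_lisFrom σ p; omega
      · obtain ⟨q, hpq, hσ, hq⟩ := hC p (by omega)
        have h2 := ih q (by omega)
        have h3 := lisFrom_succ_le hpq hσ
        omega
  exact le_antisymm (upper p) (lower (g p) p (le_refl _))

lemma sort_spec (B : Fin n → ℕ) (u : Equiv.Perm (Fin n))
    (hu : Monotone fun p : Fin n => n * B (u p) + (n - 1 - ((u p : Fin n) : ℕ)))
    {p q : Fin n} (hpq : p < q) :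
    B (u p) < B (u q) ∨ (B (u p) = B (u q) ∧ u q < u p) := by
  have hle := hu (le_of_lt hpq)
  simp only at hle
  have hne : ((u p : Fin n) : ℕ) ≠ ((u q : Fin n) : ℕ) := fun h =>
    absurd (u.injective (Fin.val_injective h)) (ne_of_lt hpq)
  have hav : ((u p : Fin n) : ℕ) < n := (u p).isLt
  have hbv : ((u q : Fin n) : ℕ) < n := (u q).isLt
  rcases lt_trichotomy (B (u p)) (B (u q)) with h | h | h
  · exact Or.inl h
  · right
    refine ⟨h, ?_⟩
    rw [h] at hle
    have h2 : n - 1 - ((u p : Fin n) : ℕ) ≤ n - 1 - ((u q : Fin n) : ℕ) :=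
      Nat.le_of_add_le_add_left hle
    exact Fin.lt_def.mpr (by omega)
  · exfalso
    have h1 : n * B (u q) + n ≤ n * B (u p) := by
      have := Nat.mul_le_mul_left n (Nat.succ_le_of_lt h)
      rwa [Nat.mul_succ] at this
    generalize n * B (u p) = X at hle h1
    generalize n * B (u q) = Y at hle h1
    omega

/-- The level key of a value `v`: `lisFrom` of `w` at the position of `v`. -/
def lkey (w : Equiv.Perm (Fin n)) (v : Fin n) : ℕ := lisFrom w (w⁻¹ v)

lemma eps_eq (w : Equiv.Perm (Fin n)) (i : Fin n) : eps w i = n + 1 - lisFrom w i := by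
  have h1 := one_le_lisFrom w i
  have h2 := lisFrom_le_sub w i
  have hi : (i : ℕ) < n := i.isLt
  simp only [eps, rajCode]
  omega

lemma mem_block_iff (w : Equiv.Perm (Fin n)) (v v' : Fin n) :
    eps w (w⁻¹ v') = eps w (w⁻¹ v) ↔ lkey w v' = lkey w v := by
  rw [eps_eq, eps_eq]
  have h1 := one_le_lisFrom w (w⁻¹ v')
  have h2 := lisFrom_le_sub w (w⁻¹ v')
  have h3 := one_le_lisFrom w (w⁻¹ v)
  have h4 := lisFrom_le_sub w (w⁻¹ v)
  unfold lkey
  omega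

lemma blockMax_spec (w : Equiv.Perm (Fin n)) (v : Fin n) :
    ∃ m : Fin n, (m : ℕ) = blockMax w v ∧ lkey w m = lkey w v ∧
      ∀ v' : Fin n, lkey w v' = lkey w v → (v' : ℕ) ≤ blockMax w v := by
  classical
  set s : Finset (Fin n) :=
    Finset.univ.filter (fun v' : Fin n => eps w (w⁻¹ v') = eps w (w⁻¹ v)) with hs
  have hne : s.Nonempty := ⟨v, Finset.mem_filter.mpr ⟨Finset.mem_univ v, rfl⟩⟩
  have hbm : blockMax w v = (s.max' hne).val := rfl
  refine ⟨s.max' hne, hbm.symm, ?_, ?_⟩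
  · have hmem := Finset.max'_mem s hne
    have := (Finset.mem_filter.mp hmem).2
    exact (mem_block_iff w v _).mp this
  · intro v' hv'
    have hv'mem : v' ∈ s :=
      Finset.mem_filter.mpr ⟨Finset.mem_univ _, (mem_block_iff w v v').mpr hv'⟩
    rw [hbm]
    exact Fin.le_def.mp (Finset.le_max' s v' hv'mem)

lemma le_blockMax (w : Equiv.Perm (Fin n)) (v : Fin n) : (v : ℕ) ≤ blockMax w v := by
  obtain ⟨m, hm, hk, hmax⟩ := blockMax_spec w v
  exact hmax v rfl

lemma blockMax_lt (w : Equiv.Perm (Fin n)) (v : Fin n) : blockMax w v < n := by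
  obtain ⟨m, hm, _, _⟩ := blockMax_spec w v
  rw [← hm]; exact m.isLt

lemma blockMax_congr {w : Equiv.Perm (Fin n)} {a b : Fin n} (h : lkey w a = lkey w b) :
    blockMax w a = blockMax w b := by
  obtain ⟨ma, hma, hka, hmaxa⟩ := blockMax_spec w a
  obtain ⟨mb, hmb, hkb, hmaxb⟩ := blockMax_spec w b
  have h1 : (ma : ℕ) ≤ blockMax w b := hmaxb ma (by rw [hka, h])
  have h2 : (mb : ℕ) ≤ blockMax w a := hmaxa mb (by rw [hkb, ← h])
  omega

lemma blockMax_step {w : Equiv.Perm (Fin n)} {b : Fin n} (h2 : 2 ≤ lkey w b) :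
    ∃ a : Fin n, lkey w a + 1 = lkey w b ∧ blockMax w b < (a : ℕ) := by
  obtain ⟨m, hm, hk, _⟩ := blockMax_spec w b
  have h2' : 2 ≤ lisFrom w (w⁻¹ m) := by
    have : lkey w m = lisFrom w (w⁻¹ m) := rfl
    omega
  obtain ⟨j, hij, hw, hstep⟩ := lisFrom_step h2'
  refine ⟨w j, ?_, ?_⟩
  · show lisFrom w (w⁻¹ (w j)) + 1 = lkey w b
    rw [perm_inv_apply_self]
    have : lkey w m = lisFrom w (w⁻¹ m) := rfl
    omega
  · have hlt : w (w⁻¹ m) < w j := hw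
    rw [perm_apply_inv_self] at hlt
    have := Fin.lt_def.mp hlt
    omega

lemma blockMax_chain {w : Equiv.Perm (Fin n)} :
    ∀ d, 1 ≤ d → ∀ b : Fin n, d < lkey w b →
      ∃ a : Fin n, lkey w a + d = lkey w b ∧ blockMax w b < (a : ℕ) := by
  intro d
  induction d with
  | zero => intro h; omega
  | succ d ih =>
    intro _ b hd
    by_cases hd0 : d = 0
    · subst hd0
      exact blockMax_step (by omega)
    · obtain ⟨a1, hk1, hlt1⟩ := ih (by omega) b (by omega)
      have hkk : 2 ≤ lkey w a1 := by omega
      obtain ⟨a2, hk2, hlt2⟩ := blockMax_step hkk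
      refine ⟨a2, by omega, ?_⟩
      have h3 : (a1 : ℕ) ≤ blockMax w a1 := le_blockMax w a1
      omega

lemma blockMax_antitone {w : Equiv.Perm (Fin n)} {a b : Fin n} (h : lkey w a < lkey w b) :
    blockMax w b < blockMax w a := by
  have h1 : 1 ≤ lkey w a := one_le_lisFrom w (w⁻¹ a)
  obtain ⟨a', hk', hlt'⟩ := blockMax_chain (w := w) (lkey w b - lkey w a) (by omega) b (by omega)
  have hkeq : lkey w a' = lkey w a := by omega
  have h2 := le_blockMax w a'
  rw [blockMax_congr hkeq] at h2
  omega

lemma phi_sorted (w : Equiv.Perm (Fin n)) {p q : Fin n} (hpq : p < q) :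
    lkey w (Phi w q) < lkey w (Phi w p) ∨
      (lkey w (Phi w q) = lkey w (Phi w p) ∧ Phi w q < Phi w p) := by
  have hu : Monotone fun p : Fin n =>
      n * blockMax w (Phi w p) + (n - 1 - ((Phi w p : Fin n) : ℕ)) := by
    have := Tuple.monotone_sort fun v : Fin n => n * blockMax w v + (n - 1 - (v : ℕ))
    exact this
  have hspec := sort_spec (blockMax w) (Phi w) hu hpq
  rcases hspec with h | ⟨h, hlt⟩
  · left
    rcases lt_trichotomy (lkey w (Phi w q)) (lkey w (Phi w p)) with h' | h' | h'
    · exact h'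
    · exact absurd (blockMax_congr h') (by omega)
    · exact absurd (blockMax_antitone h') (by omega)
  · right
    refine ⟨?_, hlt⟩
    rcases lt_trichotomy (lkey w (Phi w q)) (lkey w (Phi w p)) with h' | h' | h'
    · exact absurd (blockMax_antitone h') (by omega)
    · exact h'
    · exact absurd (blockMax_antitone h') (by omega)

lemma phi_pos_lt (w : Equiv.Perm (Fin n)) {p q : Fin n}
    (h : lkey w (Phi w q) < lkey w (Phi w p)) : p < q := by
  rcases lt_trichotomy p q with h' | rfl | h'
  · exact h'
  · omega
  · rcases phi_sorted w h' with h2 | ⟨h2, _⟩ <;> omega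

lemma lisFrom_phi (w : Equiv.Perm (Fin n)) (p : Fin n) :
    lisFrom (Phi w) p = lkey w (Phi w p) := by
  refine lisFrom_eq_of_sorted (Phi w) (fun p => lkey w (Phi w p)) ?_ ?_ ?_ p
  · intro p q hpq hval
    rcases phi_sorted w hpq with h | ⟨h, hlt⟩
    · exact h
    · exact absurd hval (asymm hlt)
  · intro p
    exact one_le_lisFrom w (w⁻¹ (Phi w p))
  · intro p h2
    have h2' : 2 ≤ lisFrom w (w⁻¹ (Phi w p)) := h2
    obtain ⟨j, hij, hw, hstep⟩ := lisFrom_step h2'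
    refine ⟨(Phi w)⁻¹ (w j), ?_, ?_, ?_⟩
    · apply phi_pos_lt w
      rw [perm_apply_inv_self]
      show lisFrom w (w⁻¹ (w j)) < lisFrom w (w⁻¹ (Phi w p))
      rw [perm_inv_apply_self]
      omega
    · rw [perm_apply_inv_self]
      have hw' := hw
      rw [perm_apply_inv_self] at hw'
      exact hw'
    · show lkey w (Phi w ((Phi w)⁻¹ (w j))) + 1 = lkey w (Phi w p)
      rw [perm_apply_inv_self]
      show lisFrom w (w⁻¹ (w j)) + 1 = lisFrom w (w⁻¹ (Phi w p))
      rw [perm_inv_apply_self]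
      exact hstep

lemma raj_add_sum (σ : Equiv.Perm (Fin n)) :
    raj σ + ∑ i : Fin n, lisFrom σ i = ∑ i : Fin n, (n - (i : ℕ)) := by
  rw [raj, ← Finset.sum_add_distrib]
  refine Finset.sum_congr rfl fun i _ => ?_
  have h2 := lisFrom_le_sub σ i
  rw [rajCode]
  omega

lemma sum_lisFrom_phi (w : Equiv.Perm (Fin n)) :
    ∑ i : Fin n, lisFrom (Phi w) i = ∑ i : Fin n, lisFrom w i := by
  calc ∑ i : Fin n, lisFrom (Phi w) i = ∑ i : Fin n, lkey w (Phi w i) :=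
        Finset.sum_congr rfl fun i _ => lisFrom_phi w i
    _ = ∑ v : Fin n, lkey w v := Equiv.sum_comp (Phi w) (lkey w)
    _ = ∑ v : Fin n, lisFrom w (w⁻¹ v) := rfl
    _ = ∑ i : Fin n, lisFrom w i := Equiv.sum_comp w⁻¹ (lisFrom w)

lemma lisFrom_phiInv (w : Equiv.Perm (Fin n)) (i : Fin n) :
    lisFrom (PhiInv w) i = lisFrom w i := by
  have hk : ∀ v : Fin n, lkey w⁻¹ v = lisFrom w v := by
    intro v
    show lisFrom w⁻¹ ((w⁻¹)⁻¹ v) = lisFrom w v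
    rw [inv_inv]
    exact lisFrom_inv_apply w v
  refine lisFrom_eq_of_sorted (PhiInv w) (lisFrom w) ?_ ?_ ?_ i
  · intro p q hpq hval
    have hval' : (Phi w⁻¹)⁻¹ p < (Phi w⁻¹)⁻¹ q := hval
    rcases phi_sorted w⁻¹ hval' with h | ⟨h, hlt⟩
    · rw [perm_apply_inv_self, perm_apply_inv_self, hk, hk] at h
      exact h
    · rw [perm_apply_inv_self, perm_apply_inv_self] at hlt
      exact absurd hpq (asymm hlt)
  · intro p; exact one_le_lisFrom w p
  · intro p h2
    obtain ⟨j, hij, hw, hstep⟩ := lisFrom_step h2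
    refine ⟨j, hij, ?_, hstep⟩
    show (Phi w⁻¹)⁻¹ p < (Phi w⁻¹)⁻¹ j
    have hkey : lkey w⁻¹ (Phi w⁻¹ ((Phi w⁻¹)⁻¹ j)) < lkey w⁻¹ (Phi w⁻¹ ((Phi w⁻¹)⁻¹ p)) := by
      rw [perm_apply_inv_self, perm_apply_inv_self, hk, hk]
      omega
    exact phi_pos_lt w⁻¹ hkey

/-- `raj(w) = raj(Φ(w)) = raj(Φ_inv(w))`, and moreover
`rajcode(Φ_inv(w)) = rajcode(w)`. -/
theorem raj_phi_eq (n : ℕ) (w : Equiv.Perm (Fin n)) :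
    raj (Phi w) = raj w ∧ raj (PhiInv w) = raj w ∧
    ∀ i : Fin n, rajCode (PhiInv w) i = rajCode w i := by
  have hcode : ∀ i : Fin n, rajCode (PhiInv w) i = rajCode w i := by
    intro i
    rw [rajCode, rajCode, lisFrom_phiInv]
  have hraj2 : raj (PhiInv w) = raj w := by
    rw [raj, raj]
    exact Finset.sum_congr rfl fun i _ => hcode i
  have h1 := raj_add_sum (Phi w)
  have h2 := raj_add_sum w
  have h3 := sum_lisFrom_phi w
  exact ⟨by omega, hraj2, hcode⟩

end RajRegularity
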